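/- arXiv:2307.00525 — 5 statements merged into one kernel-verified Lean document; each statement's English description precedes it below -/
import Mathlib

section
/- The eigenvalues of the preconditioned matrix A·Q₁⁻¹ belong to the set {1, (1+√3 i)/2, (1−√3 i)/2}. -/
open Matrix Complex

/-- A 3×3 block matrix with blocks of sizes n, m, l. -/
def blk3 {n m l : ℕ}
    (M11 : Matrix (Fin n) (Fin n) ℝ) (M12 : Matrix (Fin n) (Fin m) ℝ) (M13 : Matrix (Fin n) (Fin l) ℝ)
    (M21 : Matrix (Fin m) (Fin n) ℝ) (M22 : Matrix (Fin m) (Fin m) ℝ) (M23 : Matrix (Fin m) (Fin l) ℝ)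
    (M31 : Matrix (Fin l) (Fin n) ℝ) (M32 : Matrix (Fin l) (Fin m) ℝ) (M33 : Matrix (Fin l) (Fin l) ℝ) :
    Matrix (Fin n ⊕ (Fin m ⊕ Fin l)) (Fin n ⊕ (Fin m ⊕ Fin l)) ℝ :=
  Matrix.fromBlocks M11
    (Matrix.of fun i j => Sum.elim (M12 i) (M13 i) j)
    (Matrix.of fun i j => Sum.elim (fun k => M21 k j) (fun k => M31 k j) i)
    (Matrix.fromBlocks M22 M23 M32 M33)

section helpers

variable {n m l : ℕ}

lemma blk3_mul (a : Matrix (Fin n) (Fin n) ℝ) (b : Matrix (Fin n) (Fin m) ℝ) (c : Matrix (Fin n) (Fin l) ℝ)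
    (d : Matrix (Fin m) (Fin n) ℝ) (e : Matrix (Fin m) (Fin m) ℝ) (f : Matrix (Fin m) (Fin l) ℝ)
    (g : Matrix (Fin l) (Fin n) ℝ) (h : Matrix (Fin l) (Fin m) ℝ) (i : Matrix (Fin l) (Fin l) ℝ)
    (a' : Matrix (Fin n) (Fin n) ℝ) (b' : Matrix (Fin n) (Fin m) ℝ) (c' : Matrix (Fin n) (Fin l) ℝ)
    (d' : Matrix (Fin m) (Fin n) ℝ) (e' : Matrix (Fin m) (Fin m) ℝ) (f' : Matrix (Fin m) (Fin l) ℝ)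
    (g' : Matrix (Fin l) (Fin n) ℝ) (h' : Matrix (Fin l) (Fin m) ℝ) (i' : Matrix (Fin l) (Fin l) ℝ) :
    blk3 a b c d e f g h i * blk3 a' b' c' d' e' f' g' h' i' =
    blk3 (a*a'+b*d'+c*g') (a*b'+b*e'+c*h') (a*c'+b*f'+c*i')
         (d*a'+e*d'+f*g') (d*b'+e*e'+f*h') (d*c'+e*f'+f*i')
         (g*a'+h*d'+i*g') (g*b'+h*e'+i*h') (g*c'+h*f'+i*i') := by
  ext x y
  rcases x with x | x | x <;> rcases y with y | y | y <;>
    simp [blk3, fromBlocks, mul_apply, Fintype.sum_sum_type, Finset.sum_add_distrib, add_assoc]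

lemma blk3_one : blk3 (n:=n) (m:=m) (l:=l) 1 0 0 0 1 0 0 0 1 = 1 := by
  ext x y
  rcases x with x | x | x <;> rcases y with y | y | y <;>
    simp [blk3, fromBlocks, one_apply, Sum.inl.injEq, Sum.inr.injEq]

lemma blk3_sub (a : Matrix (Fin n) (Fin n) ℝ) (b : Matrix (Fin n) (Fin m) ℝ) (c : Matrix (Fin n) (Fin l) ℝ)
    (d : Matrix (Fin m) (Fin n) ℝ) (e : Matrix (Fin m) (Fin m) ℝ) (f : Matrix (Fin m) (Fin l) ℝ)
    (g : Matrix (Fin l) (Fin n) ℝ) (h : Matrix (Fin l) (Fin m) ℝ) (i : Matrix (Fin l) (Fin l) ℝ)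
    (a' : Matrix (Fin n) (Fin n) ℝ) (b' : Matrix (Fin n) (Fin m) ℝ) (c' : Matrix (Fin n) (Fin l) ℝ)
    (d' : Matrix (Fin m) (Fin n) ℝ) (e' : Matrix (Fin m) (Fin m) ℝ) (f' : Matrix (Fin m) (Fin l) ℝ)
    (g' : Matrix (Fin l) (Fin n) ℝ) (h' : Matrix (Fin l) (Fin m) ℝ) (i' : Matrix (Fin l) (Fin l) ℝ) :
    blk3 a b c d e f g h i - blk3 a' b' c' d' e' f' g' h' i' =
    blk3 (a-a') (b-b') (c-c') (d-d') (e-e') (f-f') (g-g') (h-h') (i-i') := by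
  ext x y
  rcases x with x | x | x <;> rcases y with y | y | y <;>
    simp [blk3, fromBlocks]

lemma blk3_add (a : Matrix (Fin n) (Fin n) ℝ) (b : Matrix (Fin n) (Fin m) ℝ) (c : Matrix (Fin n) (Fin l) ℝ)
    (d : Matrix (Fin m) (Fin n) ℝ) (e : Matrix (Fin m) (Fin m) ℝ) (f : Matrix (Fin m) (Fin l) ℝ)
    (g : Matrix (Fin l) (Fin n) ℝ) (h : Matrix (Fin l) (Fin m) ℝ) (i : Matrix (Fin l) (Fin l) ℝ)
    (a' : Matrix (Fin n) (Fin n) ℝ) (b' : Matrix (Fin n) (Fin m) ℝ) (c' : Matrix (Fin n) (Fin l) ℝ)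
    (d' : Matrix (Fin m) (Fin n) ℝ) (e' : Matrix (Fin m) (Fin m) ℝ) (f' : Matrix (Fin m) (Fin l) ℝ)
    (g' : Matrix (Fin l) (Fin n) ℝ) (h' : Matrix (Fin l) (Fin m) ℝ) (i' : Matrix (Fin l) (Fin l) ℝ) :
    blk3 a b c d e f g h i + blk3 a' b' c' d' e' f' g' h' i' =
    blk3 (a+a') (b+b') (c+c') (d+d') (e+e') (f+f') (g+g') (h+h') (i+i') := by
  ext x y
  rcases x with x | x | x <;> rcases y with y | y | y <;>
    simp [blk3, fromBlocks]

lemma blk3_zero : blk3 (n:=n) (m:=m) (l:=l) 0 0 0 0 0 0 0 0 0 = 0 := by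
  ext x y
  rcases x with x | x | x <;> rcases y with y | y | y <;>
    simp [blk3, fromBlocks]

lemma vecMul_inj {p q : ℕ} (B : Matrix (Fin p) (Fin q) ℝ) (hB : B.rank = p) :
    Function.Injective B.vecMul := by
  rw [Matrix.vecMul_injective_iff]
  rw [Matrix.rank_eq_finrank_span_row] at hB
  rw [linearIndependent_iff_card_eq_finrank_span]
  simpa [Set.finrank] using hB.symm

lemma posdef_conj {p q : ℕ} (M : Matrix (Fin q) (Fin q) ℝ) (hM : M.PosDef)
    (B : Matrix (Fin p) (Fin q) ℝ) (hB : B.rank = p) : (B * M * Bᵀ).PosDef := by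
  have h1 := hM.posSemidef.mul_mul_conjTranspose_same B
  rw [conjTranspose_eq_transpose_of_trivial] at h1
  refine Matrix.PosDef.of_dotProduct_mulVec_pos h1.isHermitian fun x hx => ?_
  have hxB : x ᵥ* B ≠ 0 := by
    intro h
    exact hx (vecMul_inj B hB (by simpa using h))
  have h2 := hM.dotProduct_mulVec_pos hxB
  have h3 : (B * M * Bᵀ) *ᵥ x = B *ᵥ (M *ᵥ (x ᵥ* B)) := by
    rw [← Matrix.mulVec_mulVec, ← Matrix.mulVec_mulVec, Matrix.mulVec_transpose]
  show 0 < star x ⬝ᵥ ((B * M * Bᵀ) *ᵥ x)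
  rw [star_trivial, h3, Matrix.dotProduct_mulVec]
  simpa [star_trivial] using h2

end helpers

theorem stmt0 {n m l : ℕ} (A : Matrix (Fin n) (Fin n) ℝ) (B : Matrix (Fin m) (Fin n) ℝ)
    (C : Matrix (Fin l) (Fin m) ℝ) (hA : A.PosDef) (hB : B.rank = m) (hC : C.rank = l)
    (S : Matrix (Fin m) (Fin m) ℝ) (hS : S = B * A⁻¹ * Bᵀ)
    (X : Matrix (Fin l) (Fin l) ℝ) (hX : X = C * S⁻¹ * Cᵀ)
    (𝒜 Q₁ : Matrix (Fin n ⊕ (Fin m ⊕ Fin l)) (Fin n ⊕ (Fin m ⊕ Fin l)) ℝ)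
    (h𝒜 : 𝒜 = blk3 A Bᵀ 0 B 0 Cᵀ 0 C 0)
    (hQ : Q₁ = blk3 A Bᵀ 0 0 (-S) 0 0 0 X) :
    ∀ μ ∈ spectrum ℂ ((𝒜 * Q₁⁻¹).map Complex.ofReal),
      μ = 1 ∨ μ = (1 + (Real.sqrt 3 : ℂ) * Complex.I) / 2
        ∨ μ = (1 - (Real.sqrt 3 : ℂ) * Complex.I) / 2 := by
  -- positive definiteness and invertibility facts
  have hSpd : S.PosDef := hS ▸ posdef_conj A⁻¹ hA.inv B hB
  have hXpd : X.PosDef := hX ▸ posdef_conj S⁻¹ hSpd.inv C hC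
  have hAd : IsUnit A.det := (Matrix.isUnit_iff_isUnit_det A).1 hA.isUnit
  have hSd : IsUnit S.det := (Matrix.isUnit_iff_isUnit_det S).1 hSpd.isUnit
  have hXd : IsUnit X.det := (Matrix.isUnit_iff_isUnit_det X).1 hXpd.isUnit
  have hA1 : A * A⁻¹ = 1 := Matrix.mul_nonsing_inv A hAd
  have hA2 : A⁻¹ * A = 1 := Matrix.nonsing_inv_mul A hAd
  have hS1 : S * S⁻¹ = 1 := Matrix.mul_nonsing_inv S hSd
  have hS2 : S⁻¹ * S = 1 := Matrix.nonsing_inv_mul S hSd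
  have hX1 : X * X⁻¹ = 1 := Matrix.mul_nonsing_inv X hXd
  have hX2 : X⁻¹ * X = 1 := Matrix.nonsing_inv_mul X hXd
  -- the preconditioned matrix
  obtain ⟨u, hu⟩ : ∃ u, u = B * A⁻¹ := ⟨_, rfl⟩
  obtain ⟨v, hv⟩ : ∃ v, v = Cᵀ * X⁻¹ := ⟨_, rfl⟩
  obtain ⟨w, hw⟩ : ∃ w, w = -(C * S⁻¹) := ⟨_, rfl⟩
  obtain ⟨T, hT⟩ : ∃ T, T = blk3 1 0 0 u 1 v 0 w 0 := ⟨_, rfl⟩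
  obtain ⟨R, hR⟩ : ∃ R, R = blk3 A⁻¹ (A⁻¹ * Bᵀ * S⁻¹) 0 0 (-S⁻¹) 0 0 0 X⁻¹ := ⟨_, rfl⟩
  have hS' : S = B * (A⁻¹ * Bᵀ) := by rw [hS, Matrix.mul_assoc]
  have hQR : Q₁ * R = 1 := by
    rw [hQ, hR, blk3_mul, ← blk3_one]
    congr 1 <;> simp [← Matrix.mul_assoc, hA1, hS1, hX1]
  have h𝒜T : T * Q₁ = 𝒜 := by
    rw [hQ, h𝒜, hT, blk3_mul]
    congr 1 <;> simp [hu, hv, hw, Matrix.mul_assoc, ← hS', hA2, hX2, hS2]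
  have hQinv : Q₁⁻¹ = R := Matrix.inv_eq_right_inv hQR
  have h𝒜Q : 𝒜 * Q₁⁻¹ = T := by
    rw [hQinv, ← h𝒜T, Matrix.mul_assoc, hQR, Matrix.mul_one]
  -- the key algebraic relation
  have hwv : w * v = -1 := by
    rw [hw, hv, Matrix.neg_mul, ← Matrix.mul_assoc, ← hX, hX1]
  have hT2 : T * T = blk3 1 0 0 (u+u) (1+v*w) v (w*u) w (-1) := by
    rw [hT, blk3_mul]
    congr 1 <;> simp [hwv]
  have hTm1 : T - 1 = blk3 0 0 0 u 0 v 0 w (-1) := by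
    rw [hT, ← blk3_one, blk3_sub]
    congr 1 <;> simp
  have hM2 : T * T - T + 1 = blk3 1 0 0 u (v*w+1) 0 (w*u) 0 0 := by
    rw [hT2, hT, ← blk3_one, blk3_sub, blk3_add]
    congr 1 <;> simp
  have hN : (T - 1) * (T * T - T + 1) = blk3 0 0 0 (u + v*(w*u)) 0 0 0 0 0 := by
    rw [hTm1, hM2, blk3_mul]
    congr 1 <;> simp [Matrix.mul_add, ← Matrix.mul_assoc, hwv]
  have hN2 : ((T - 1) * (T * T - T + 1)) * ((T - 1) * (T * T - T + 1)) = 0 := by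
    rw [hN, blk3_mul, ← blk3_zero]
    congr 1 <;> simp
  -- move to ℂ
  obtain ⟨Tc, hTc⟩ : ∃ Tc : Matrix (Fin n ⊕ (Fin m ⊕ Fin l)) (Fin n ⊕ (Fin m ⊕ Fin l)) ℂ,
    Tc = T.map Complex.ofReal := ⟨_, rfl⟩
  have hTc' : Tc = (Complex.ofRealHom.mapMatrix :
      Matrix (Fin n ⊕ (Fin m ⊕ Fin l)) (Fin n ⊕ (Fin m ⊕ Fin l)) ℝ →+* _) T := by
    rw [hTc]; rfl
  have hNc : ((Tc - 1) * (Tc * Tc - Tc + 1)) * ((Tc - 1) * (Tc * Tc - Tc + 1)) = 0 := by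
    rw [hTc']
    have := congrArg (Complex.ofRealHom.mapMatrix :
      Matrix (Fin n ⊕ (Fin m ⊕ Fin l)) (Fin n ⊕ (Fin m ⊕ Fin l)) ℝ →+* _) hN2
    simpa only [_root_.map_mul, _root_.map_sub, _root_.map_add, _root_.map_one,
      _root_.map_zero] using this
  intro μ hμ
  rw [h𝒜Q, ← hTc] at hμ
  rcases isEmpty_or_nonempty (Fin n ⊕ (Fin m ⊕ Fin l)) with hE | hNE
  · rw [spectrum.mem_iff] at hμ
    exact absurd (isUnit_of_subsingleton _) hμ
  · -- polynomial spectral mapping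
    have hp0 : (Polynomial.aeval Tc)
        (((Polynomial.X - 1) * (Polynomial.X ^ 2 - Polynomial.X + 1)) ^ 2 : Polynomial ℂ) = 0 := by
      simp only [map_pow, _root_.map_mul, _root_.map_sub, _root_.map_add, Polynomial.aeval_X, _root_.map_one, pow_two]
      exact hNc
    have hmem := spectrum.subset_polynomial_aeval Tc
      (((Polynomial.X - 1) * (Polynomial.X ^ 2 - Polynomial.X + 1)) ^ 2 : Polynomial ℂ)
      ⟨μ, hμ, rfl⟩
    rw [hp0, spectrum.zero_eq] at hmem
    have hμ0 : ((μ - 1) * (μ ^ 2 - μ + 1)) ^ 2 = 0 := by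
      simpa using hmem
    have hfac : (μ - 1) * (μ ^ 2 - μ + 1) = 0 := by
      exact pow_eq_zero_iff (two_ne_zero) |>.1 hμ0
    rcases mul_eq_zero.1 hfac with h1 | h2
    · exact Or.inl (sub_eq_zero.1 h1)
    · -- quadratic factorization
      have hsi : ((Real.sqrt 3 : ℂ) * Complex.I) ^ 2 = -3 := by
        rw [mul_pow, ← Complex.ofReal_pow, Real.sq_sqrt (by norm_num : (3:ℝ) ≥ 0), Complex.I_sq]
        norm_num
      have hquad : (μ - (1 + (Real.sqrt 3 : ℂ) * Complex.I) / 2) *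
          (μ - (1 - (Real.sqrt 3 : ℂ) * Complex.I) / 2) = 0 := by
        linear_combination h2 - hsi / 4
      rcases mul_eq_zero.1 hquad with h3 | h4
      · exact Or.inr (Or.inl (sub_eq_zero.1 h3))
      · exact Or.inr (Or.inr (sub_eq_zero.1 h4))
end

section
/- λ = −1 is an eigenvalue of A·Q₂⁻¹ with eigenvector of the form (0; x₂; 0) if and only if x₂ is a nonzero vector in the kernel of C S⁻¹. -/
open Matrix Complex

lemma aux_mulVec_transpose_ne {m n : ℕ} (B : Matrix (Fin m) (Fin n) ℝ) (hB : B.rank = m)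
    {x : Fin m → ℝ} (hx : x ≠ 0) : Bᵀ *ᵥ x ≠ 0 := by
  have h1 : (Bᵀ).rank = m := by rw [Matrix.rank_transpose]; exact hB
  have h2 : LinearMap.ker (Bᵀ).mulVecLin = ⊥ := by
    rw [← Submodule.finrank_eq_zero (R := ℝ)]
    have := (Bᵀ).mulVecLin.finrank_range_add_finrank_ker
    rw [Module.finrank_pi] at this
    simp only [Fintype.card_fin] at this
    have hr : Module.finrank ℝ (LinearMap.range (Bᵀ).mulVecLin) = m := h1
    omega
  have hinj : Function.Injective (Bᵀ).mulVecLin := LinearMap.ker_eq_bot.mp h2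
  intro h
  apply hx
  have h0 : (Bᵀ).mulVecLin x = (Bᵀ).mulVecLin 0 := by
    rw [mulVec_transpose] at h; simpa using h
  exact hinj h0

lemma aux_posdef_sandwich {m n : ℕ} {A : Matrix (Fin n) (Fin n) ℝ} (hA : A.PosDef)
    (B : Matrix (Fin m) (Fin n) ℝ) (hB : B.rank = m) : (B * A * Bᵀ).PosDef := by
  refine Matrix.PosDef.of_dotProduct_mulVec_pos ?_ ?_
  · have := Matrix.isHermitian_mul_mul_conjTranspose B hA.1
    simpa using this
  · intro x hx
    have h := hA.dotProduct_mulVec_pos (x := Bᵀ *ᵥ x) (aux_mulVec_transpose_ne B hB hx)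
    have key : star x ⬝ᵥ ((B * A * Bᵀ) *ᵥ x) = star (Bᵀ *ᵥ x) ⬝ᵥ (A *ᵥ (Bᵀ *ᵥ x)) := by
      simp only [star_trivial]
      rw [← mulVec_mulVec, ← mulVec_mulVec, dotProduct_mulVec, ← mulVec_transpose]
    rw [key]; exact h

lemma blk3_eq {n m l : ℕ}
    (M11 : Matrix (Fin n) (Fin n) ℝ) (M12 : Matrix (Fin n) (Fin m) ℝ) (M13 : Matrix (Fin n) (Fin l) ℝ)
    (M21 : Matrix (Fin m) (Fin n) ℝ) (M22 : Matrix (Fin m) (Fin m) ℝ) (M23 : Matrix (Fin m) (Fin l) ℝ)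
    (M31 : Matrix (Fin l) (Fin n) ℝ) (M32 : Matrix (Fin l) (Fin m) ℝ) (M33 : Matrix (Fin l) (Fin l) ℝ) :
    blk3 M11 M12 M13 M21 M22 M23 M31 M32 M33 =
      Matrix.fromBlocks M11 (fromCols M12 M13) (fromRows M21 M31)
        (Matrix.fromBlocks M22 M23 M32 M33) := by
  ext (i | i | i) (j | j | j) <;> simp [blk3, fromCols_apply_inl, fromCols_apply_inr, fromRows_apply_inl, fromRows_apply_inr]

lemma fromRows_zero' {n m l : ℕ} :
    fromRows (0 : Matrix (Fin m) (Fin n) ℝ) (0 : Matrix (Fin l) (Fin n) ℝ) = 0 := by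
  ext (i | i) j <;> simp [fromRows_apply_inl, fromRows_apply_inr]

theorem stmt4 {n m l : ℕ} (A : Matrix (Fin n) (Fin n) ℝ) (B : Matrix (Fin m) (Fin n) ℝ)
    (C : Matrix (Fin l) (Fin m) ℝ) (hA : A.PosDef) (hB : B.rank = m) (hC : C.rank = l)
    (S : Matrix (Fin m) (Fin m) ℝ) (hS : S = B * A⁻¹ * Bᵀ)
    (X : Matrix (Fin l) (Fin l) ℝ) (hX : X = C * S⁻¹ * Cᵀ)
    (𝒜 Q₂ : Matrix (Fin n ⊕ (Fin m ⊕ Fin l)) (Fin n ⊕ (Fin m ⊕ Fin l)) ℝ)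
    (h𝒜 : 𝒜 = blk3 A Bᵀ 0 B 0 Cᵀ 0 C 0)
    (hQ : Q₂ = blk3 A Bᵀ 0 0 S Cᵀ 0 0 (-X))
    (x₂ : Fin m → ℝ) :
    (Sum.elim (0 : Fin n → ℝ) (Sum.elim x₂ (0 : Fin l → ℝ)) ≠ 0 ∧
      (𝒜 * Q₂⁻¹) *ᵥ Sum.elim (0 : Fin n → ℝ) (Sum.elim x₂ (0 : Fin l → ℝ)) =
        (-1 : ℝ) • Sum.elim (0 : Fin n → ℝ) (Sum.elim x₂ (0 : Fin l → ℝ)))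
    ↔ (x₂ ≠ 0 ∧ (C * S⁻¹) *ᵥ x₂ = 0) := by
  have hAdet : IsUnit A.det := isUnit_iff_ne_zero.mpr (ne_of_gt hA.det_pos)
  have hSpd : S.PosDef := hS ▸ aux_posdef_sandwich hA.inv B hB
  have hSdet : IsUnit S.det := isUnit_iff_ne_zero.mpr (ne_of_gt hSpd.det_pos)
  have hXpd : X.PosDef := hX ▸ aux_posdef_sandwich hSpd.inv C hC
  have hXdet : IsUnit X.det := isUnit_iff_ne_zero.mpr (ne_of_gt hXpd.det_pos)
  -- Q₂ is invertible
  have hQform : Q₂ = Matrix.fromBlocks A (fromCols Bᵀ 0) 0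
      (Matrix.fromBlocks S Cᵀ 0 (-X)) := by
    rw [hQ, blk3_eq, fromRows_zero']
  have hQdet : IsUnit Q₂.det := by
    rw [hQform, Matrix.det_fromBlocks_zero₂₁, Matrix.det_fromBlocks_zero₂₁, Matrix.det_neg, Fintype.card_fin]
    exact (hAdet.mul (hSdet.mul ((isUnit_one.neg.pow l).mul hXdet)))
  -- the vector w = Q₂⁻¹ v
  set w₂ : Fin m → ℝ := S⁻¹ *ᵥ x₂ with hw₂
  set w₁ : Fin n → ℝ := -(A⁻¹ *ᵥ (Bᵀ *ᵥ w₂)) with hw₁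
  set v : Fin n ⊕ (Fin m ⊕ Fin l) → ℝ := Sum.elim 0 (Sum.elim x₂ 0) with hv
  set w : Fin n ⊕ (Fin m ⊕ Fin l) → ℝ := Sum.elim w₁ (Sum.elim w₂ 0) with hw
  have hAw₁ : A *ᵥ w₁ = -(Bᵀ *ᵥ w₂) := by
    rw [hw₁, Matrix.mulVec_neg, mulVec_mulVec, Matrix.mul_nonsing_inv A hAdet, one_mulVec]
  have hSw₂ : S *ᵥ w₂ = x₂ := by
    rw [hw₂, mulVec_mulVec, Matrix.mul_nonsing_inv S hSdet, one_mulVec]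
  have hQw : Q₂ *ᵥ w = v := by
    rw [hQform, hw, Matrix.fromBlocks_mulVec]
    simp only [Sum.elim_comp_inl, Sum.elim_comp_inr]
    rw [fromCols_mulVec_sumElim, Matrix.fromBlocks_mulVec]
    simp only [Sum.elim_comp_inl, Sum.elim_comp_inr]
    rw [hAw₁, hSw₂, hv]
    funext i; rcases i with i | i | i <;> simp
  have hQinvv : Q₂⁻¹ *ᵥ v = w := by
    rw [← hQw, mulVec_mulVec, Matrix.nonsing_inv_mul Q₂ hQdet, one_mulVec]
  have h𝒜form : 𝒜 = Matrix.fromBlocks A (fromCols Bᵀ 0) (fromRows B 0)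
      (Matrix.fromBlocks 0 Cᵀ C 0) := by
    rw [h𝒜, blk3_eq]
  have hBw₁ : B *ᵥ w₁ = -x₂ := by
    rw [hw₁, Matrix.mulVec_neg, mulVec_mulVec, mulVec_mulVec, ← hS, hSw₂]
  have h𝒜w : 𝒜 *ᵥ w = Sum.elim (0 : Fin n → ℝ) (Sum.elim (-x₂) ((C * S⁻¹) *ᵥ x₂)) := by
    rw [h𝒜form, hw, Matrix.fromBlocks_mulVec]
    simp only [Sum.elim_comp_inl, Sum.elim_comp_inr]
    rw [fromCols_mulVec_sumElim, fromRows_mulVec, Matrix.fromBlocks_mulVec]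
    simp only [Sum.elim_comp_inl, Sum.elim_comp_inr]
    rw [hAw₁, hBw₁]
    funext i; rcases i with i | i | i <;> simp [hw₂, mulVec_mulVec]
  have hkey : (𝒜 * Q₂⁻¹) *ᵥ v = Sum.elim (0 : Fin n → ℝ) (Sum.elim (-x₂) ((C * S⁻¹) *ᵥ x₂)) := by
    rw [← mulVec_mulVec, hQinvv, h𝒜w]
  have hrhs : (-1 : ℝ) • v = Sum.elim (0 : Fin n → ℝ) (Sum.elim (-x₂) (0 : Fin l → ℝ)) := by
    funext i
    rcases i with i | (i | i) <;> simp [hv]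
  have hne : v ≠ 0 ↔ x₂ ≠ 0 := by
    constructor
    · intro h hx; apply h; funext i; rcases i with i | (i | i) <;> simp [hv, hx]
    · intro h hvz
      apply h; funext i
      have := congrFun hvz (Sum.inr (Sum.inl i))
      simpa [hv] using this
  rw [hkey, hrhs, hne]
  constructor
  · rintro ⟨h1, h2⟩
    refine ⟨h1, ?_⟩
    funext j
    have := congrFun h2 (Sum.inr (Sum.inr j))
    simpa using this
  · rintro ⟨h1, h2⟩
    exact ⟨h1, by rw [h2]⟩
end

section
/- If λ is a complex (non-real) eigenvalue of the preconditioned matrix 𝒜 Q̄⁻¹ with unit eigenvector (x; y; z) (after symmetric scaling by D̄^{-1/2}), and if Ky = 0, then |λ − 1|² = 1 − 2 x* Ã x ≤ 1 − γ_min^A; in particular 1 − √(1 − γ_min^A) ≤ Re(λ) ≤ 1 + √(1 − γ_min^A), and no such λ exists when γ_min^A > 1. -/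
open Matrix Complex

theorem stmt11 {n m l : ℕ}
    (Atl : Matrix (Fin n) (Fin n) ℝ) (R : Matrix (Fin m) (Fin n) ℝ) (K : Matrix (Fin l) (Fin m) ℝ)
    (hAtl : Atl.PosDef) (hR : R.rank = m) (hK : K.rank = l)
    (γminA : ℝ)
    (hγ : ∀ v : Fin n → ℂ, γminA * (star v ⬝ᵥ v).re ≤ (star v ⬝ᵥ (Atl.map Complex.ofReal *ᵥ v)).re)
    (lam : ℂ) (x : Fin n → ℂ) (y : Fin m → ℂ) (z : Fin l → ℂ)
    (hnorm : (star x ⬝ᵥ x) + (star y ⬝ᵥ y) + (star z ⬝ᵥ z) = 1)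
    (h1 : Atl.map Complex.ofReal *ᵥ x - lam • x = (lam - 1) • (Rᵀ.map Complex.ofReal *ᵥ y))
    (h2 : R.map Complex.ofReal *ᵥ x - (lam - 1) • (Kᵀ.map Complex.ofReal *ᵥ z) = (-lam) • y)
    (h3 : K.map Complex.ofReal *ᵥ y = lam • z)
    (hKy : K.map Complex.ofReal *ᵥ y = 0)
    (him : lam.im ≠ 0) :
    ‖lam - 1‖ ^ 2 = 1 - 2 * (star x ⬝ᵥ (Atl.map Complex.ofReal *ᵥ x)).re ∧
    ‖lam - 1‖ ^ 2 ≤ 1 - γminA ∧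
    γminA ≤ 1 ∧
    1 - Real.sqrt (1 - γminA) ≤ lam.re ∧ lam.re ≤ 1 + Real.sqrt (1 - γminA) := by
  have hlam0 : lam ≠ 0 := fun h => him (by simp [h])
  have hz : z = 0 := by
    have h0 : lam • z = 0 := h3.symm.trans hKy
    rcases smul_eq_zero.mp h0 with h | h
    · exact absurd h hlam0
    · exact h
  have h2' : R.map Complex.ofReal *ᵥ x = (-lam) • y := by
    rw [hz] at h2; simpa using h2
  set a : ℂ := star x ⬝ᵥ (Atl.map Complex.ofReal *ᵥ x) with ha
  set p : ℂ := star x ⬝ᵥ x with hp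
  set q : ℂ := star y ⬝ᵥ y with hq
  have hstar : (R.map Complex.ofReal) *ᵥ (star x) = star ((R.map Complex.ofReal) *ᵥ x) := by
    funext i
    simp [Matrix.mulVec, dotProduct, Pi.star_apply, Complex.star_def, map_sum,
      Complex.conj_ofReal]
  have key : star x ⬝ᵥ ((Rᵀ).map Complex.ofReal *ᵥ y) = star (-lam) * q := by
    rw [Matrix.transpose_map, Matrix.dotProduct_mulVec, Matrix.vecMul_transpose, hstar, h2',
      star_smul, smul_dotProduct]
    rfl
  have E : a - lam * p = (lam - 1) * (star (-lam) * q) := by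
    have hE0 := congrArg (fun v => star x ⬝ᵥ v) h1
    simp only [dotProduct_sub, dotProduct_smul, smul_eq_mul, key] at hE0
    exact hE0
  have hpim : p.im = 0 := by
    rw [hp]
    simp [dotProduct, Complex.im_sum, Complex.mul_im]
    exact Finset.sum_eq_zero fun i _ => by ring
  have hqim : q.im = 0 := by
    rw [hq]
    simp [dotProduct, Complex.im_sum, Complex.mul_im]
    exact Finset.sum_eq_zero fun i _ => by ring
  have hpre : 0 ≤ p.re := by
    rw [hp]
    simp [dotProduct, Complex.re_sum, Complex.mul_re]
    exact Finset.sum_nonneg fun i _ => by nlinarith [sq_nonneg (x i).re, sq_nonneg (x i).im]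
  have hH : (Atl.map Complex.ofReal)ᴴ = Atl.map Complex.ofReal := by
    ext i j
    simp [Matrix.conjTranspose_apply, Matrix.map_apply, Complex.conj_ofReal]
    exact hAtl.isHermitian.apply i j
  have haim : a.im = 0 := by
    have hs : star a = a := by
      rw [ha, ← star_dotProduct, Matrix.star_mulVec, hH, ← Matrix.dotProduct_mulVec]
    have h := congrArg Complex.im hs
    simp at h
    linarith
  have hpq : p.re + q.re = 1 := by
    rw [hz] at hnorm
    have h := congrArg Complex.re hnorm
    simpa using h
  have hEim := congrArg Complex.im E
  have hEre := congrArg Complex.re E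
  simp [Complex.sub_im, Complex.sub_re, Complex.mul_im, Complex.mul_re, haim, hpim, hqim,
    Complex.star_def] at hEim hEre
  have h0 : lam.im * (p.re - q.re) = 0 := by linear_combination -hEim
  have hpq2 : p.re = q.re := by
    rcases mul_eq_zero.mp h0 with h | h
    · exact absurd h him
    · linarith
  have hpr : p.re = 1/2 := by linarith
  have hqr : q.re = 1/2 := by linarith
  rw [hpr, hqr] at hEre
  have habs : ‖lam - 1‖ ^ 2 = (lam.re - 1) ^ 2 + lam.im ^ 2 := by
    rw [Complex.sq_norm, Complex.normSq_apply]
    simp [Complex.sub_re, Complex.sub_im]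
    ring
  have g1 : ‖lam - 1‖ ^ 2 = 1 - 2 * a.re := by
    rw [habs]; linear_combination 2 * hEre
  have hgx := hγ x
  rw [← hp, ← ha] at hgx
  have harge : γminA / 2 ≤ a.re := by rw [hpr] at hgx; linarith
  have g2 : ‖lam - 1‖ ^ 2 ≤ 1 - γminA := by rw [g1]; linarith
  have habs_nonneg : (0:ℝ) ≤ ‖lam - 1‖ ^ 2 := by positivity
  have g3 : γminA ≤ 1 := by linarith
  have hs0 : 0 ≤ Real.sqrt (1 - γminA) := Real.sqrt_nonneg _
  have hs2 : Real.sqrt (1 - γminA) ^ 2 = 1 - γminA := Real.sq_sqrt (by linarith)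
  have hkey : (lam.re - 1) ^ 2 ≤ 1 - γminA := by
    rw [habs] at g2; nlinarith [sq_nonneg lam.im]
  clear_value a p q
  clear hγ hnorm h1 h2 h3 hKy E hEim hEre key hstar hgx
  refine ⟨g1, g2, g3, ?_, ?_⟩
  · nlinarith [hkey, hs2, hs0, sq_nonneg (lam.re - 1 + Real.sqrt (1 - γminA))]
  · nlinarith [hkey, hs2, hs0, sq_nonneg (lam.re - 1 - Real.sqrt (1 - γminA))]
end

section
/- If λ is a non-real eigenvalue of 𝒜 Q̄⁻¹ with scaled eigenvector (x; y; z) such that Ky ≠ 0, then |λ − 1|² = 1 − (x* Ã x)/‖y‖² ≤ 1 − γ_min^A ‖x‖²/‖y‖²; in particular all complex eigenvalues lie in the open disk of center (1,0) and radius 1. -/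
open Matrix Complex

lemma star_mulVec_map {a b : ℕ} (M : Matrix (Fin a) (Fin b) ℝ) (v : Fin b → ℂ) :
    star (M.map Complex.ofReal *ᵥ v) = M.map Complex.ofReal *ᵥ star v := by
  funext i
  simp [Matrix.mulVec, dotProduct, Matrix.map_apply, star_sum, Pi.star_apply]

lemma dot_self_real {a : ℕ} (v : Fin a → ℂ) : star v ⬝ᵥ v = ((star v ⬝ᵥ v).re : ℂ) := by
  have h : star (star v ⬝ᵥ v) = star v ⬝ᵥ v := by
    rw [star_dotProduct]
    simp [dotProduct, mul_comm]
  exact (Complex.conj_eq_iff_re.mp h).symm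

lemma dot_self_re_sum {a : ℕ} (v : Fin a → ℂ) :
    (star v ⬝ᵥ v).re = ∑ i, Complex.normSq (v i) := by
  simp [dotProduct, Pi.star_apply, Complex.normSq_apply, Complex.mul_re]

lemma dot_self_re_pos {a : ℕ} {v : Fin a → ℂ} (hv : v ≠ 0) : 0 < (star v ⬝ᵥ v).re := by
  rw [dot_self_re_sum]
  obtain ⟨i, hi⟩ := Function.ne_iff.mp hv
  exact Finset.sum_pos' (fun j _ => Complex.normSq_nonneg _)
    ⟨i, Finset.mem_univ i, Complex.normSq_pos.mpr hi⟩

lemma mulVec_inj {a b : ℕ} (M : Matrix (Fin a) (Fin b) ℝ) (hM : M.rank = b)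
    {v : Fin b → ℝ} (hv : M *ᵥ v = 0) : v = 0 := by
  have h := M.mulVecLin.finrank_range_add_finrank_ker
  rw [Matrix.rank] at hM
  rw [hM] at h
  simp only [Module.finrank_fintype_fun_eq_card, Fintype.card_fin] at h
  have hker : LinearMap.ker M.mulVecLin = ⊥ := by
    apply Submodule.finrank_eq_zero.mp
    omega
  have hmem : v ∈ LinearMap.ker M.mulVecLin := by simpa [Matrix.mulVecLin] using hv
  simpa [hker] using hmem

lemma mulVec_map_re {a b : ℕ} (M : Matrix (Fin a) (Fin b) ℝ) (v : Fin b → ℂ) (i : Fin a) :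
    ((M.map Complex.ofReal *ᵥ v) i).re = (M *ᵥ (fun j => (v j).re)) i := by
  simp [Matrix.mulVec, dotProduct, Complex.mul_re]

lemma mulVec_map_im {a b : ℕ} (M : Matrix (Fin a) (Fin b) ℝ) (v : Fin b → ℂ) (i : Fin a) :
    ((M.map Complex.ofReal *ᵥ v) i).im = (M *ᵥ (fun j => (v j).im)) i := by
  simp [Matrix.mulVec, dotProduct, Complex.mul_im]

lemma dot_transpose {a b : ℕ} (M : Matrix (Fin a) (Fin b) ℝ) (u : Fin b → ℂ) (v : Fin a → ℂ) :
    star u ⬝ᵥ ((Mᵀ.map Complex.ofReal) *ᵥ v) = star (M.map Complex.ofReal *ᵥ u) ⬝ᵥ v := by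
  rw [Matrix.transpose_map, Matrix.dotProduct_mulVec, Matrix.vecMul_transpose,
    ← star_mulVec_map]

theorem stmt12 {n m l : ℕ}
    (Atl : Matrix (Fin n) (Fin n) ℝ) (R : Matrix (Fin m) (Fin n) ℝ) (K : Matrix (Fin l) (Fin m) ℝ)
    (hAtl : Atl.PosDef) (hR : R.rank = m) (hK : K.rank = l)
    (γminA : ℝ)
    (hγ : ∀ v : Fin n → ℂ, γminA * (star v ⬝ᵥ v).re ≤ (star v ⬝ᵥ (Atl.map Complex.ofReal *ᵥ v)).re)
    (lam : ℂ) (x : Fin n → ℂ) (y : Fin m → ℂ) (z : Fin l → ℂ)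
    (hnorm : (star x ⬝ᵥ x) + (star y ⬝ᵥ y) + (star z ⬝ᵥ z) = 1)
    (h1 : Atl.map Complex.ofReal *ᵥ x - lam • x = (lam - 1) • (Rᵀ.map Complex.ofReal *ᵥ y))
    (h2 : R.map Complex.ofReal *ᵥ x - (lam - 1) • (Kᵀ.map Complex.ofReal *ᵥ z) = (-lam) • y)
    (h3 : K.map Complex.ofReal *ᵥ y = lam • z)
    (hKy : K.map Complex.ofReal *ᵥ y ≠ 0)
    (him : lam.im ≠ 0) :
    ‖lam - 1‖ ^ 2 = 1 - (star x ⬝ᵥ (Atl.map Complex.ofReal *ᵥ x)).re / (star y ⬝ᵥ y).re ∧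
    ‖lam - 1‖ ^ 2 ≤ 1 - γminA * (star x ⬝ᵥ x).re / (star y ⬝ᵥ y).re ∧
    ‖lam - 1‖ < 1 := by
  have hy0 : y ≠ 0 := by
    intro h; apply hKy; rw [h, Matrix.mulVec_zero]
  have hQpos : 0 < (star y ⬝ᵥ y).re := dot_self_re_pos hy0
  have hlam1 : lam - 1 ≠ 0 := by
    intro h
    apply him
    rw [sub_eq_zero.mp h]
    simp
  -- x ≠ 0
  have hx0 : x ≠ 0 := by
    intro h
    rw [h] at h1
    simp only [Matrix.mulVec_zero, smul_zero, sub_zero] at h1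
    have hRy : Rᵀ.map Complex.ofReal *ᵥ y = 0 := by
      rcases smul_eq_zero.mp h1.symm with h' | h'
      · exact absurd h' hlam1
      · exact h'
    have hyre : Rᵀ *ᵥ (fun j => (y j).re) = 0 := by
      funext k
      have := congrArg (fun v => (v k).re) hRy
      simpa [mulVec_map_re] using this
    have hyim : Rᵀ *ᵥ (fun j => (y j).im) = 0 := by
      funext k
      have := congrArg (fun v => (v k).im) hRy
      simpa [mulVec_map_im] using this
    have hrkT : Rᵀ.rank = m := by rw [Matrix.rank_transpose, hR]
    have h5 := mulVec_inj Rᵀ hrkT hyre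
    have h6 := mulVec_inj Rᵀ hrkT hyim
    apply hy0
    funext j
    have e5 := congrFun h5 j
    have e6 := congrFun h6 j
    simp only [Pi.zero_apply] at e5 e6 ⊢
    exact Complex.ext e5 e6
  -- symmetric A over ℂ
  have hsym : (Atl.map Complex.ofReal)ᵀ = Atl.map Complex.ofReal := by
    ext i j
    simp only [Matrix.transpose_apply, Matrix.map_apply]
    have := congrFun (congrFun hAtl.1 i) j
    simp only [Matrix.conjTranspose_apply, star_trivial] at this
    exact_mod_cast this
  -- a is real
  have haR : star x ⬝ᵥ (Atl.map Complex.ofReal *ᵥ x) =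
      (((star x ⬝ᵥ (Atl.map Complex.ofReal *ᵥ x)).re : ℝ) : ℂ) := by
    have hc : star (star x ⬝ᵥ (Atl.map Complex.ofReal *ᵥ x)) =
        star x ⬝ᵥ (Atl.map Complex.ofReal *ᵥ x) := by
      calc star (star x ⬝ᵥ (Atl.map Complex.ofReal *ᵥ x))
          = star (Atl.map Complex.ofReal *ᵥ x) ⬝ᵥ x := (star_dotProduct _ _).symm
        _ = (Atl.map Complex.ofReal *ᵥ star x) ⬝ᵥ x := by rw [star_mulVec_map]
        _ = x ⬝ᵥ (Atl.map Complex.ofReal *ᵥ star x) := dotProduct_comm _ _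
        _ = (x ᵥ* (Atl.map Complex.ofReal)) ⬝ᵥ star x := Matrix.dotProduct_mulVec _ _ _
        _ = (x ᵥ* (Atl.map Complex.ofReal)ᵀ) ⬝ᵥ star x := by rw [hsym]
        _ = (Atl.map Complex.ofReal *ᵥ x) ⬝ᵥ star x := by rw [Matrix.vecMul_transpose]
        _ = star x ⬝ᵥ (Atl.map Complex.ofReal *ᵥ x) := dotProduct_comm _ _
    exact (Complex.conj_eq_iff_re.mp hc).symm
  -- equation 1 dotted with star x
  have e1 : star x ⬝ᵥ (Atl.map Complex.ofReal *ᵥ x)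
      - lam * (((star x ⬝ᵥ x).re : ℝ) : ℂ)
      = (lam - 1) * (star (R.map Complex.ofReal *ᵥ x) ⬝ᵥ y) := by
    have e := congrArg (fun v => star x ⬝ᵥ v) h1
    simp only [dotProduct_sub, dotProduct_smul, smul_eq_mul] at e
    rw [dot_transpose] at e
    rw [dot_self_real x] at e
    exact e
  -- equation 2 dotted with star y
  have e2 : star y ⬝ᵥ (R.map Complex.ofReal *ᵥ x)
      - (lam - 1) * ((starRingEnd ℂ) lam * (((star z ⬝ᵥ z).re : ℝ) : ℂ))
      = -lam * (((star y ⬝ᵥ y).re : ℝ) : ℂ) := by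
    have e := congrArg (fun v => star y ⬝ᵥ v) h2
    simp only [dotProduct_sub, dotProduct_smul, smul_eq_mul] at e
    rw [dot_transpose, h3, star_smul, smul_dotProduct, smul_eq_mul,
      dot_self_real z, dot_self_real y] at e
    exact e
  -- conjugate of equation 2
  have hconjdot : (starRingEnd ℂ) (star y ⬝ᵥ (R.map Complex.ofReal *ᵥ x)) =
      star (R.map Complex.ofReal *ᵥ x) ⬝ᵥ y := by
    rw [show (starRingEnd ℂ) (star y ⬝ᵥ (R.map Complex.ofReal *ᵥ x)) =
      star (star y ⬝ᵥ (R.map Complex.ofReal *ᵥ x)) from rfl]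
    exact (star_dotProduct _ _).symm
  have e2' : (star (R.map Complex.ofReal *ᵥ x) ⬝ᵥ y)
      - (starRingEnd ℂ) (lam - 1) * (lam * (((star z ⬝ᵥ z).re : ℝ) : ℂ))
      = -(starRingEnd ℂ) lam * (((star y ⬝ᵥ y).re : ℝ) : ℂ) := by
    have e := congrArg (starRingEnd ℂ) e2
    simp only [_root_.map_sub, _root_.map_mul, _root_.map_neg, Complex.conj_conj, Complex.conj_ofReal, _root_.map_one, hconjdot] at e
    simp only [_root_.map_sub, _root_.map_one]
    linear_combination e
  -- master equation
  have E : (((star x ⬝ᵥ (Atl.map Complex.ofReal *ᵥ x)).re : ℝ) : ℂ)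
      = lam * (((star x ⬝ᵥ x).re : ℝ) : ℂ)
      + ((lam - 1) * (starRingEnd ℂ) (lam - 1)) * lam * (((star z ⬝ᵥ z).re : ℝ) : ℂ)
      - (lam - 1) * (starRingEnd ℂ) lam * (((star y ⬝ᵥ y).re : ℝ) : ℂ) := by
    rw [← haR]
    linear_combination e1 + (lam - 1) * e2'
  obtain ⟨ERe, EIm⟩ := Complex.ext_iff.mp E
  set A0 : ℝ := (star x ⬝ᵥ (Atl.map Complex.ofReal *ᵥ x)).re with hA0
  set P : ℝ := (star x ⬝ᵥ x).re with hP
  set Q : ℝ := (star y ⬝ᵥ y).re with hQ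
  set Rr : ℝ := (star z ⬝ᵥ z).re with hRr
  simp only [Complex.add_re, Complex.add_im, Complex.sub_re, Complex.sub_im, Complex.mul_re,
    Complex.mul_im, Complex.ofReal_re, Complex.ofReal_im, Complex.one_re, Complex.one_im,
    Complex.conj_re, Complex.conj_im] at ERe EIm
  set α := lam.re with hα
  set β := lam.im with hβ
  have h4 : P + ((α - 1) ^ 2 + β ^ 2) * Rr = Q := by
    have h5 : β * (P + ((α - 1) ^ 2 + β ^ 2) * Rr - Q) = 0 := by linear_combination -EIm
    rcases mul_eq_zero.mp h5 with h' | h'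
    · exact absurd h' him
    · linarith
  have key : A0 = (1 - ((α - 1) ^ 2 + β ^ 2)) * Q := by
    linear_combination ERe + α * h4
  have habs : ‖lam - 1‖ ^ 2 = (α - 1) ^ 2 + β ^ 2 := by
    rw [Complex.sq_norm, Complex.normSq_apply, Complex.sub_re, Complex.sub_im,
      Complex.one_re, Complex.one_im]
    ring
  -- A0 positive
  have hA0pos : 0 < A0 := by
    rw [hA0]
    have hdecomp : (star x ⬝ᵥ (Atl.map Complex.ofReal *ᵥ x)).re =
        (fun j => (x j).re) ⬝ᵥ (Atl *ᵥ fun j => (x j).re) +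
        (fun j => (x j).im) ⬝ᵥ (Atl *ᵥ fun j => (x j).im) := by
      simp only [dotProduct, Matrix.mulVec, Matrix.map_apply, Pi.star_apply,
        Complex.mul_re, Complex.re_sum, Complex.im_sum, Complex.mul_im, Complex.ofReal_re,
        Complex.ofReal_im, RCLike.star_def, Complex.conj_re, Complex.conj_im]
      rw [← Finset.sum_add_distrib]
      apply Finset.sum_congr rfl
      intro i _
      simp only [zero_mul, sub_zero, add_zero]
      ring
    rw [hdecomp]
    have hcase : (fun j => (x j).re) ≠ 0 ∨ (fun j => (x j).im) ≠ 0 := by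
      by_contra hcon
      push_neg at hcon
      apply hx0
      funext i
      have e5 := congrFun hcon.1 i
      have e6 := congrFun hcon.2 i
      simp only [Pi.zero_apply] at e5 e6 ⊢
      exact Complex.ext e5 e6
    have hsd1 := hAtl.posSemidef.dotProduct_mulVec_nonneg (fun j => (x j).re)
    have hsd2 := hAtl.posSemidef.dotProduct_mulVec_nonneg (fun j => (x j).im)
    simp only [star_trivial] at hsd1 hsd2
    rcases hcase with hc | hc
    · have := hAtl.dotProduct_mulVec_pos hc
      simp only [star_trivial] at this
      linarith
    · have := hAtl.dotProduct_mulVec_pos hc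
      simp only [star_trivial] at this
      linarith
  have hγx := hγ x
  rw [← hP, ← hA0] at hγx
  have c1 : ‖lam - 1‖ ^ 2 = 1 - A0 / Q := by
    rw [habs]
    field_simp
    linarith [key]
  refine ⟨c1, ?_, ?_⟩
  · rw [c1]
    have h8 : γminA * P / Q ≤ A0 / Q := (div_le_div_iff_of_pos_right hQpos).mpr hγx
    linarith
  · have h7 : ‖lam - 1‖ ^ 2 < 1 := by
      rw [c1]
      have : 0 < A0 / Q := div_pos hA0pos hQpos
      linarith
    nlinarith [norm_nonneg (lam - 1)]
end

section
/- For each γ_A > 0, the cubic equation λ³ − (2 + γ_A)λ² + (2 + γ_A)λ − γ_A = 0, equivalently λ((λ−1)²+1) = γ_A(λ² − λ + 1), has a unique positive real root λ⁺(γ_A); moreover γ_A/2 < λ⁺(γ_A) < γ_A + 1, and λ⁺ is increasing in γ_A. -/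
/-- Key positivity: the "cross product" quotient is strictly positive when `a ≠ b`. -/
lemma keyQ (a b : ℝ) (ha : 0 < a) (hb : 0 < b) (hab : a ≠ b) :
    0 < a^2*b^2 - a^2*b - a*b^2 + a^2 + a*b + b^2 - 2*a - 2*b + 2 := by
  have hge : (0:ℝ) ≤ a^2*b^2 - a^2*b - a*b^2 + a^2 + a*b + b^2 - 2*a - 2*b + 2 := by
    nlinarith [sq_nonneg (a*(b-1)), sq_nonneg (b*(a-1)), sq_nonneg (a+b-2)]
  rcases lt_or_eq_of_le hge with h | h
  · exact h
  · exfalso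
    have hs : (a*(b-1))^2 + (b*(a-1))^2 + (a+b-2)^2 = 0 := by nlinarith
    have h1 : a*(b-1) = 0 := by nlinarith [sq_nonneg (a*(b-1)), sq_nonneg (b*(a-1)), sq_nonneg (a+b-2)]
    have h2 : b*(a-1) = 0 := by nlinarith [sq_nonneg (a*(b-1)), sq_nonneg (b*(a-1)), sq_nonneg (a+b-2)]
    have hb1 : b = 1 := by
      rcases mul_eq_zero.1 h1 with h | h
      · linarith
      · linarith
    have ha1 : a = 1 := by
      rcases mul_eq_zero.1 h2 with h | h
      · linarith
      · linarith
    exact hab (by rw [ha1, hb1])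

/-- Strict monotonicity: if `a < b` are positive roots for parameters `γ, γ'`, then `γ < γ'`. -/
lemma keyMono (a b γ γ' : ℝ) (ha : 0 < a) (hb : 0 < b) (hab : a < b)
    (hpa : a^3 - (2+γ)*a^2 + (2+γ)*a - γ = 0)
    (hpb : b^3 - (2+γ')*b^2 + (2+γ')*b - γ' = 0) : γ < γ' := by
  have hqa : 0 < a^2 - a + 1 := by nlinarith [sq_nonneg (2*a-1)]
  have hqb : 0 < b^2 - b + 1 := by nlinarith [sq_nonneg (2*b-1)]
  have hQ := keyQ a b ha hb (ne_of_lt hab)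
  have hD : γ' * ((a^2-a+1)*(b^2-b+1)) - γ * ((a^2-a+1)*(b^2-b+1)) =
      (b-a) * (a^2*b^2 - a^2*b - a*b^2 + a^2 + a*b + b^2 - 2*a - 2*b + 2) := by
    linear_combination (b^2-b+1) * hpa - (a^2-a+1) * hpb
  have hpos : 0 < (b-a) * (a^2*b^2 - a^2*b - a*b^2 + a^2 + a*b + b^2 - 2*a - 2*b + 2) :=
    mul_pos (by linarith) hQ
  have := mul_pos hqa hqb
  nlinarith

theorem stmt18 (p : ℝ → ℝ → ℝ)
    (hp : ∀ lam γ, p lam γ = lam ^ 3 - (2 + γ) * lam ^ 2 + (2 + γ) * lam - γ) :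
    (∀ lam γ, p lam γ = 0 ↔ lam * ((lam - 1) ^ 2 + 1) = γ * (lam ^ 2 - lam + 1)) ∧
    (∀ γ : ℝ, 0 < γ → ∃! lam : ℝ, 0 < lam ∧ p lam γ = 0) ∧
    (∀ γ lam : ℝ, 0 < γ → 0 < lam → p lam γ = 0 → γ / 2 < lam ∧ lam < γ + 1) ∧
    (∀ γ γ' lam lam' : ℝ, 0 < γ → γ < γ' → 0 < lam → p lam γ = 0 →
      0 < lam' → p lam' γ' = 0 → lam < lam') := by
  refine ⟨?_, ?_, ?_, ?_⟩
  · intro lam γ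
    rw [hp]
    constructor
    · intro h; linear_combination h
    · intro h; linear_combination h
  · intro γ hγ
    -- existence via IVT on [0, γ+1]
    have hcont : ContinuousOn (fun lam => p lam γ) (Set.Icc 0 (γ+1)) := by
      have : (fun lam => p lam γ) =
          fun lam : ℝ => lam ^ 3 - (2 + γ) * lam ^ 2 + (2 + γ) * lam - γ := by
        funext lam; exact hp lam γ
      rw [this]
      exact (Continuous.continuousOn (by continuity))
    have h0 : p 0 γ = -γ := by rw [hp]; ring
    have h1 : p (γ+1) γ = 1 := by rw [hp]; ring
    have hle : (0:ℝ) ≤ γ + 1 := by linarith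
    have hmem : (0:ℝ) ∈ Set.Icc (p 0 γ) (p (γ+1) γ) := by
      rw [h0, h1]; constructor <;> linarith
    obtain ⟨lam, hlam_mem, hlam_eq0⟩ := intermediate_value_Icc hle hcont hmem
    have hlam_eq : p lam γ = 0 := hlam_eq0
    have hlam_pos : 0 < lam := by
      rcases lt_or_eq_of_le hlam_mem.1 with h | h
      · exact h
      · exfalso; rw [← h, h0] at hlam_eq; linarith
    refine ⟨lam, ⟨hlam_pos, hlam_eq⟩, ?_⟩
    intro b hb
    -- uniqueness
    by_contra hne
    have hpa : b^3 - (2+γ)*b^2 + (2+γ)*b - γ = 0 := by rw [← hp]; exact hb.2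
    have hpl : lam^3 - (2+γ)*lam^2 + (2+γ)*lam - γ = 0 := by rw [← hp]; exact hlam_eq
    rcases lt_trichotomy b lam with h | h | h
    · exact absurd (keyMono b lam γ γ hb.1 hlam_pos h hpa hpl) (lt_irrefl γ)
    · exact hne h
    · exact absurd (keyMono lam b γ γ hlam_pos hb.1 h hpl hpa) (lt_irrefl γ)
  · intro γ lam hγ hlam heq
    have h : lam^3 - (2+γ)*lam^2 + (2+γ)*lam - γ = 0 := by rw [← hp]; exact heq
    have hq : 0 < lam^2 - lam + 1 := by nlinarith [sq_nonneg (2*lam-1)]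
    constructor
    · -- (2*lam - γ)*(lam^2-lam+1) = lam^3
      have key : (2*lam - γ) * (lam^2 - lam + 1) = lam^3 := by linear_combination h
      nlinarith [pow_pos hlam 3]
    · -- (γ+1-lam)*(lam^2-lam+1) = 1
      have key : (γ + 1 - lam) * (lam^2 - lam + 1) = 1 := by linear_combination -h
      nlinarith
  · intro γ γ' lam lam' hγ hγγ' hlam hpl hlam' hpl'
    have h1 : lam^3 - (2+γ)*lam^2 + (2+γ)*lam - γ = 0 := by rw [← hp]; exact hpl
    have h2 : lam'^3 - (2+γ')*lam'^2 + (2+γ')*lam' - γ' = 0 := by rw [← hp]; exact hpl'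
    rcases lt_trichotomy lam lam' with h | h | h
    · exact h
    · exfalso
      have hq : 0 < lam^2 - lam + 1 := by nlinarith [sq_nonneg (2*lam-1)]
      subst h
      have : γ * (lam^2 - lam + 1) = γ' * (lam^2 - lam + 1) := by linear_combination h2 - h1
      nlinarith
    · exact absurd (keyMono lam' lam γ' γ hlam' hlam h h2 h1) (by linarith)
end
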